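/- The real unit interval [0,1] with min, max, 0, 1 is a flat distributive lattice; in particular it satisfies the disjunction property: max(a,b) = 1 implies a = 1 or b = 1 (classically). -/
import Mathlib


/-- Bounded lattice terms in `m` variables, built from variables, `⊥`, `⊤`, `⊓` and `⊔`. -/
inductive BLatTerm (m : ℕ) : Type
  | var : Fin m → BLatTerm m
  | bot : BLatTerm m
  | top : BLatTerm m
  | inf : BLatTerm m → BLatTerm m → BLatTerm m
  | sup : BLatTerm m → BLatTerm m → BLatTerm m

/-- Evaluation of a bounded lattice term in a bounded lattice `D` at a valuation `d`. -/
def BLatTerm.eval {D : Type} [Lattice D] [BoundedOrder D] {m : ℕ} (d : Fin m → D) :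
    BLatTerm m → D
  | .var i => d i
  | .bot => ⊥
  | .top => ⊤
  | .inf s t => s.eval d ⊓ t.eval d
  | .sup s t => s.eval d ⊔ t.eval d

/-- Substitution of terms for the variables of a term. -/
def BLatTerm.subst {m k : ℕ} (γ : Fin m → BLatTerm k) : BLatTerm m → BLatTerm k
  | .var i => γ i
  | .bot => .bot
  | .top => .top
  | .inf s t => .inf (s.subst γ) (t.subst γ)
  | .sup s t => .sup (s.subst γ) (t.subst γ)

/-- Equality of bounded lattice terms in the free bounded distributive lattice, i.e. equality
in every bounded distributive lattice. -/
def BTermEq {k : ℕ} (s t : BLatTerm k) : Prop :=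
  ∀ (D : Type) [DistribLattice D] [BoundedOrder D] (d : Fin k → D), s.eval d = t.eval d

/-- A bounded distributive lattice `D` is *flat* (as a model of the Lawvere theory of bounded
distributive lattices) if every equation `α(d) = β(d)` between tuples of lattice polynomials
applied to a tuple `d` of elements of `D` factors as `α ∘ γ = β ∘ γ` (equality of lattice
polynomials, i.e. in the free distributive lattice) with `γ(d') = d` for some tuple `d'`. -/
def IsFlat (D : Type) [DistribLattice D] [BoundedOrder D] : Prop :=
  ∀ (n m : ℕ) (α β : Fin n → BLatTerm m) (d : Fin m → D),
    (∀ i, (α i).eval d = (β i).eval d) →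
    ∃ (k : ℕ) (γ : Fin m → BLatTerm k),
      (∀ i, BTermEq ((α i).subst γ) ((β i).subst γ)) ∧
      ∃ d' : Fin k → D, ∀ j, (γ j).eval d' = d j

noncomputable instance : BoundedOrder unitInterval where
  top := 1
  le_top x := x.2.2
  bot := 0
  bot_le x := x.2.1

lemma BLatTerm.eval_subst {D : Type} [Lattice D] [BoundedOrder D] {m k : ℕ}
    (γ : Fin m → BLatTerm k) (t : BLatTerm m) (e : Fin k → D) :
    (t.subst γ).eval e = t.eval (fun j => (γ j).eval e) := by
  induction t <;> simp [BLatTerm.subst, BLatTerm.eval, *]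

/-- Join of a list of variables. -/
def listSup {m : ℕ} : List (Fin m) → BLatTerm m
  | [] => .bot
  | l :: L => .sup (.var l) (listSup L)

lemma listSup_le_iff {D : Type} [Lattice D] [BoundedOrder D] {m : ℕ} (e : Fin m → D)
    (L : List (Fin m)) (x : D) :
    (listSup L).eval e ≤ x ↔ ∀ l ∈ L, e l ≤ x := by
  induction L with
  | nil => simp [listSup, BLatTerm.eval]
  | cons a L ih => simp [listSup, BLatTerm.eval, sup_le_iff, ih]

lemma le_listSup {D : Type} [Lattice D] [BoundedOrder D] {m : ℕ} (e : Fin m → D)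
    {L : List (Fin m)} {l : Fin m} (hl : l ∈ L) :
    e l ≤ (listSup L).eval e := by
  induction L with
  | nil => simp at hl
  | cons a L ih =>
    rcases List.mem_cons.mp hl with h | h
    · subst h; exact le_sup_left
    · exact le_trans (ih h) le_sup_right

open scoped Classical in
/-- The substituting tuple of terms attached to `d : Fin m → [0,1]`. -/
noncomputable def gammaOf {m : ℕ} (d : Fin m → unitInterval) (j : Fin m) : BLatTerm m :=
  if d j = 1 then .top
  else if d j = 0 then .bot
  else listSup ((List.finRange m).filter (fun l => d l ≤ d j))

lemma gammaOf_mono {D : Type} [Lattice D] [BoundedOrder D] {m : ℕ}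
    (d : Fin m → unitInterval) (e : Fin m → D) {j j' : Fin m} (h : d j ≤ d j') :
    (gammaOf d j).eval e ≤ (gammaOf d j').eval e := by
  classical
  unfold gammaOf
  by_cases h1 : d j' = 1
  · simp [h1, BLatTerm.eval]
  · have hj1 : d j ≠ 1 := fun hh => h1 (le_antisymm unitInterval.le_one' (hh ▸ h))
    rw [if_neg h1, if_neg hj1]
    by_cases h0 : d j = 0
    · simp [h0, BLatTerm.eval]
    · have hj0 : d j' ≠ 0 := fun hh => h0 (le_antisymm (hh ▸ h) unitInterval.nonneg')
      rw [if_neg h0, if_neg hj0]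
      rw [listSup_le_iff]
      intro l hl
      apply le_listSup
      simp only [List.mem_filter, List.mem_finRange, decide_eq_true_eq, true_and] at hl ⊢
      exact le_trans hl h

lemma gammaOf_bot {D : Type} [Lattice D] [BoundedOrder D] {m : ℕ}
    (d : Fin m → unitInterval) (e : Fin m → D) {j : Fin m} (h : d j = 0) :
    (gammaOf d j).eval e = ⊥ := by
  classical
  have h1 : d j ≠ 1 := by
    rw [h]; intro hh
    exact zero_ne_one (congrArg Subtype.val hh)
  unfold gammaOf
  rw [if_neg h1, if_pos h]
  rfl

lemma gammaOf_top {D : Type} [Lattice D] [BoundedOrder D] {m : ℕ}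
    (d : Fin m → unitInterval) (e : Fin m → D) {j : Fin m} (h : d j = 1) :
    (gammaOf d j).eval e = ⊤ := by
  classical
  unfold gammaOf
  rw [if_pos h]
  rfl

lemma gammaOf_eval_self {m : ℕ} (d : Fin m → unitInterval) (j : Fin m) :
    (gammaOf d j).eval d = d j := by
  classical
  by_cases h1 : d j = 1
  · rw [gammaOf_top d d h1, h1]; rfl
  by_cases h0 : d j = 0
  · rw [gammaOf_bot d d h0, h0]; rfl
  unfold gammaOf
  rw [if_neg h1, if_neg h0]
  apply le_antisymm
  · rw [listSup_le_iff]
    intro l hl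
    simp only [List.mem_filter, List.mem_finRange, decide_eq_true_eq, true_and] at hl
    exact hl
  · apply le_listSup
    simp

/-- Key lemma: the evaluation of a term on a chain in `[0,1]` is mirrored on any
order-compatible tuple in any bounded distributive lattice. -/
lemma key_lemma {D : Type} [DistribLattice D] [BoundedOrder D] {m : ℕ}
    (d : Fin m → unitInterval) (g : Fin m → D)
    (hmono : ∀ j j', d j ≤ d j' → g j ≤ g j')
    (hb : ∀ j, d j = 0 → g j = ⊥)
    (ht : ∀ j, d j = 1 → g j = ⊤) :
    ∀ t : BLatTerm m,
      (t.eval d = 0 ∧ t.eval g = ⊥) ∨ (t.eval d = 1 ∧ t.eval g = ⊤) ∨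
        ∃ j, t.eval d = d j ∧ t.eval g = g j := by
  intro t
  induction t with
  | var i => exact Or.inr (Or.inr ⟨i, rfl, rfl⟩)
  | bot => exact Or.inl ⟨rfl, rfl⟩
  | top => exact Or.inr (Or.inl ⟨rfl, rfl⟩)
  | inf s t ihs iht =>
    rcases ihs with ⟨hsd, hsg⟩ | ⟨hsd, hsg⟩ | ⟨j, hsd, hsg⟩
    · left
      constructor
      · show s.eval d ⊓ t.eval d = 0
        rw [hsd]
        exact le_antisymm inf_le_left unitInterval.nonneg'
      · show s.eval g ⊓ t.eval g = ⊥
        rw [hsg, bot_inf_eq]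
    · have : (BLatTerm.inf s t).eval d = t.eval d := by
        show s.eval d ⊓ t.eval d = t.eval d
        rw [hsd]
        exact inf_eq_right.mpr unitInterval.le_one'
      have hg : (BLatTerm.inf s t).eval g = t.eval g := by
        show s.eval g ⊓ t.eval g = t.eval g
        rw [hsg, top_inf_eq]
      rw [show ((BLatTerm.inf s t).eval d : unitInterval) = t.eval d from this, hg]
      exact iht
    · rcases iht with ⟨htd, htg⟩ | ⟨htd, htg⟩ | ⟨j', htd, htg⟩
      · left
        constructor
        · show s.eval d ⊓ t.eval d = 0
          rw [htd]
          exact le_antisymm inf_le_right unitInterval.nonneg'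
        · show s.eval g ⊓ t.eval g = ⊥
          rw [htg, inf_bot_eq]
      · have hd : (BLatTerm.inf s t).eval d = s.eval d := by
          show s.eval d ⊓ t.eval d = s.eval d
          rw [htd]
          exact inf_eq_left.mpr unitInterval.le_one'
        have hg : (BLatTerm.inf s t).eval g = s.eval g := by
          show s.eval g ⊓ t.eval g = s.eval g
          rw [htg, inf_top_eq]
        rw [hd, hg]
        exact Or.inr (Or.inr ⟨j, hsd, hsg⟩)
      · right; right
        rcases le_total (d j) (d j') with h | h
        · refine ⟨j, ?_, ?_⟩
          · show s.eval d ⊓ t.eval d = d j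
            rw [hsd, htd]; exact inf_eq_left.mpr h
          · show s.eval g ⊓ t.eval g = g j
            rw [hsg, htg]; exact inf_eq_left.mpr (hmono _ _ h)
        · refine ⟨j', ?_, ?_⟩
          · show s.eval d ⊓ t.eval d = d j'
            rw [hsd, htd]; exact inf_eq_right.mpr h
          · show s.eval g ⊓ t.eval g = g j'
            rw [hsg, htg]; exact inf_eq_right.mpr (hmono _ _ h)
  | sup s t ihs iht =>
    rcases ihs with ⟨hsd, hsg⟩ | ⟨hsd, hsg⟩ | ⟨j, hsd, hsg⟩
    · have hd : (BLatTerm.sup s t).eval d = t.eval d := by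
        show s.eval d ⊔ t.eval d = t.eval d
        rw [hsd]
        exact sup_eq_right.mpr unitInterval.nonneg'
      have hg : (BLatTerm.sup s t).eval g = t.eval g := by
        show s.eval g ⊔ t.eval g = t.eval g
        rw [hsg, bot_sup_eq]
      rw [hd, hg]
      exact iht
    · right; left
      constructor
      · show s.eval d ⊔ t.eval d = 1
        rw [hsd]
        exact le_antisymm unitInterval.le_one' le_sup_left
      · show s.eval g ⊔ t.eval g = ⊤
        rw [hsg, top_sup_eq]
    · rcases iht with ⟨htd, htg⟩ | ⟨htd, htg⟩ | ⟨j', htd, htg⟩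
      · have hd : (BLatTerm.sup s t).eval d = s.eval d := by
          show s.eval d ⊔ t.eval d = s.eval d
          rw [htd]
          exact sup_eq_left.mpr unitInterval.nonneg'
        have hg : (BLatTerm.sup s t).eval g = s.eval g := by
          show s.eval g ⊔ t.eval g = s.eval g
          rw [htg, sup_bot_eq]
        rw [hd, hg]
        exact Or.inr (Or.inr ⟨j, hsd, hsg⟩)
      · right; left
        constructor
        · show s.eval d ⊔ t.eval d = 1
          rw [htd]
          exact le_antisymm unitInterval.le_one' le_sup_right
        · show s.eval g ⊔ t.eval g = ⊤
          rw [htg, sup_top_eq]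
      · right; right
        rcases le_total (d j) (d j') with h | h
        · refine ⟨j', ?_, ?_⟩
          · show s.eval d ⊔ t.eval d = d j'
            rw [hsd, htd]; exact sup_eq_right.mpr h
          · show s.eval g ⊔ t.eval g = g j'
            rw [hsg, htg]; exact sup_eq_right.mpr (hmono _ _ h)
        · refine ⟨j, ?_, ?_⟩
          · show s.eval d ⊔ t.eval d = d j
            rw [hsd, htd]; exact sup_eq_left.mpr h
          · show s.eval g ⊔ t.eval g = g j
            rw [hsg, htg]; exact sup_eq_left.mpr (hmono _ _ h)

/-- The real unit interval `[0,1]`, with `min`, `max`, `0`, `1`, is a flat distributive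
lattice; in particular it has the disjunction property `max a b = 1 → a = 1 ∨ b = 1`. -/
theorem unitInterval_isFlat :
    IsFlat unitInterval ∧
    (∀ a b : unitInterval, a ⊔ b = ⊤ → a = ⊤ ∨ b = ⊤) := by
  constructor
  · intro n m α β d hαβ
    refine ⟨m, gammaOf d, ?_, d, fun j => gammaOf_eval_self d j⟩
    intro i D _ _ e
    rw [BLatTerm.eval_subst, BLatTerm.eval_subst]
    set g : Fin m → D := fun j => (gammaOf d j).eval e with hg
    have hmono : ∀ j j', d j ≤ d j' → g j ≤ g j' := fun j j' h => gammaOf_mono d e h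
    have hb : ∀ j, d j = 0 → g j = ⊥ := fun j h => gammaOf_bot d e h
    have ht : ∀ j, d j = 1 → g j = ⊤ := fun j h => gammaOf_top d e h
    have hα := key_lemma d g hmono hb ht (α i)
    have hβ := key_lemma d g hmono hb ht (β i)
    have hzo : (0 : unitInterval) ≠ 1 := fun hh => zero_ne_one (congrArg Subtype.val hh)
    rcases hα with ⟨had, hag⟩ | ⟨had, hag⟩ | ⟨j, had, hag⟩ <;>
      rcases hβ with ⟨hbd, hbg⟩ | ⟨hbd, hbg⟩ | ⟨j', hbd, hbg⟩
    · rw [hag, hbg]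
    · exact absurd (had ▸ hbd ▸ hαβ i) hzo
    · rw [hag, hbg, hb j' (by rw [← hbd, ← hαβ i, had])]
    · exact absurd (hbd ▸ had ▸ (hαβ i).symm) hzo
    · rw [hag, hbg]
    · rw [hag, hbg, ht j' (by rw [← hbd, ← hαβ i, had])]
    · rw [hag, hbg, hb j (by rw [← had, hαβ i, hbd])]
    · rw [hag, hbg, ht j (by rw [← had, hαβ i, hbd])]
    · have hdd : d j = d j' := by rw [← had, ← hbd, hαβ i]
      rw [hag, hbg, le_antisymm (hmono _ _ hdd.le) (hmono _ _ hdd.ge)]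
  · intro a b h
    rcases le_total a b with hle | hle
    · right
      rw [sup_eq_right.mpr hle] at h
      exact h
    · left
      rw [sup_eq_left.mpr hle] at h
      exact h
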